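/- Let L ∈ (0,1) and let a : (0,π) → [0,1] be a measurable function with ∫₀^π a(x) dx = Lπ. Then for every positive integer j, ∫₀^π a(x) sin²(jx) dx ≥ (Lπ − sin(Lπ))/2. -/
import Mathlib


open MeasureTheory Real

theorem stmt0 (L : ℝ) (hL : L ∈ Set.Ioo (0:ℝ) 1)
    (a : ℝ → ℝ) (ha : Measurable a)
    (hab : ∀ x ∈ Set.Ioo (0:ℝ) π, a x ∈ Set.Icc (0:ℝ) 1)
    (hint : ∫ x in Set.Ioo (0:ℝ) π, a x = L * π)
    (j : ℕ) (hj : 1 ≤ j) :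
    (L * π - Real.sin (L * π)) / 2
      ≤ ∫ x in Set.Ioo (0:ℝ) π, a x * Real.sin (j * x) ^ 2 := by
  obtain ⟨hL0, hL1⟩ := hL
  have hπ := Real.pi_pos
  set c := Real.cos (L * π) with hc
  have hLπ0 : 0 < L * π := by positivity
  have hLπpi : L * π ≤ π := by nlinarith
  have hmeas : MeasurableSet (Set.Ioo (0:ℝ) π) := measurableSet_Ioo
  have hfin : volume (Set.Ioo (0:ℝ) π) ≠ ⊤ := measure_Ioo_lt_top.ne
  have hj0 : (0:ℝ) < (j:ℝ) := by exact_mod_cast hj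
  have h2j : (2 * (j:ℝ)) ≠ 0 := by positivity
  -- integrability helpers
  have bdd : ∀ (φ : ℝ → ℝ), Measurable φ → ∀ C : ℝ, (∀ x ∈ Set.Ioo (0:ℝ) π, |φ x| ≤ C) →
      IntegrableOn φ (Set.Ioo (0:ℝ) π) := by
    intro φ hφ C hC
    apply Measure.integrableOn_of_bounded hfin hφ.aestronglyMeasurable
    filter_upwards [ae_restrict_mem hmeas] with x hx using hC x hx
  have habs : ∀ x ∈ Set.Ioo (0:ℝ) π, |a x| ≤ 1 := by
    intro x hx
    have h := hab x hx
    rw [abs_le]; exact ⟨by linarith [h.1], h.2⟩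
  have hIa : IntegrableOn a (Set.Ioo 0 π) := bdd a ha 1 habs
  have hIcos : IntegrableOn (fun x => a x * (Real.cos (2 * j * x) - c)) (Set.Ioo 0 π) := by
    refine bdd _ (ha.mul ((Real.measurable_cos.comp (measurable_const.mul measurable_id)).sub
      measurable_const)) 2 ?_
    intro x hx
    have h1 := habs x hx
    have h2 := Real.neg_one_le_cos (2 * j * x)
    have h3 := Real.cos_le_one (2 * j * x)
    have h4 := Real.neg_one_le_cos (L * π)
    have h5 := Real.cos_le_one (L * π)
    rw [abs_mul]
    calc |a x| * |Real.cos (2 * ↑j * x) - c| ≤ 1 * 2 := by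
          apply mul_le_mul h1 ?_ (abs_nonneg _) zero_le_one
          rw [abs_le]; constructor <;> [skip; skip] <;> simp only [hc] <;> nlinarith
      _ = 2 := by ring
  have hgcont : Continuous (fun u : ℝ => max (Real.cos u - c) 0) :=
    (Real.continuous_cos.sub continuous_const).max continuous_const
  have hIg : IntegrableOn (fun x => max (Real.cos (2 * j * x) - c) 0) (Set.Ioo 0 π) := by
    have : Continuous (fun x : ℝ => max (Real.cos (2 * j * x) - c) 0) :=
      hgcont.comp (continuous_const.mul continuous_id)
    exact this.integrableOn_Icc.mono_set Set.Ioo_subset_Icc_self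
  -- pointwise comparison
  have hpt : ∀ x ∈ Set.Ioo (0:ℝ) π,
      a x * (Real.cos (2 * j * x) - c) ≤ max (Real.cos (2 * j * x) - c) 0 := by
    intro x hx
    obtain ⟨h0, h1⟩ := hab x hx
    rcases le_or_gt 0 (Real.cos (2 * j * x) - c) with h | h
    · calc a x * (Real.cos (2 * j * x) - c) ≤ 1 * (Real.cos (2 * j * x) - c) :=
          mul_le_mul_of_nonneg_right h1 h
        _ ≤ max (Real.cos (2 * j * x) - c) 0 := by rw [one_mul]; exact le_max_left _ _
    · calc a x * (Real.cos (2 * j * x) - c) ≤ 0 := mul_nonpos_of_nonneg_of_nonpos h0 h.le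
        _ ≤ _ := le_max_right _ _
  have hmono : ∫ x in Set.Ioo (0:ℝ) π, a x * (Real.cos (2 * j * x) - c)
      ≤ ∫ x in Set.Ioo (0:ℝ) π, max (Real.cos (2 * j * x) - c) 0 :=
    setIntegral_mono_on hIcos hIg hmeas hpt
  -- compute the integral of the positive part
  have hcalc : ∫ x in Set.Ioo (0:ℝ) π, max (Real.cos (2 * j * x) - c) 0
      = Real.sin (L * π) - c * (L * π) := by
    rw [← integral_Ioc_eq_integral_Ioo, ← intervalIntegral.integral_of_le hπ.le]
    have comp : (∫ x in (0:ℝ)..π, max (Real.cos (2 * j * x) - c) 0)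
        = (2 * (j:ℝ))⁻¹ • ∫ u in (0:ℝ)..(2 * j * π), max (Real.cos u - c) 0 := by
      have := intervalIntegral.integral_comp_mul_left
        (a := (0:ℝ)) (b := π) (fun u : ℝ => max (Real.cos u - c) 0) h2j
      simpa using this
    rw [comp]
    have hper : Function.Periodic (fun u : ℝ => max (Real.cos u - c) 0) (2 * π) := by
      intro u; simp [Real.cos_add_two_pi]
    have hint' : ∀ t₁ t₂ : ℝ, IntervalIntegrable (fun u : ℝ => max (Real.cos u - c) 0)
        MeasureSpace.volume t₁ t₂ := fun t₁ t₂ => hgcont.intervalIntegrable t₁ t₂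
    have hperint : (∫ u in (0:ℝ)..(2 * j * π), max (Real.cos u - c) 0)
        = (j:ℤ) • ∫ u in (0:ℝ)..(2 * π), max (Real.cos u - c) 0 := by
      have := hper.intervalIntegral_add_zsmul_eq (j:ℤ) 0 hint'
      have heq : (0:ℝ) + (j:ℤ) • (2*π) = 2 * (j:ℝ) * π := by rw [zsmul_eq_mul]; push_cast; ring
      rw [heq, zero_add] at this
      exact this
    rw [hperint]
    -- compute ∫₀^{2π}
    have hsplit : (∫ u in (0:ℝ)..(2 * π), max (Real.cos u - c) 0)
        = (∫ u in (0:ℝ)..(L * π), max (Real.cos u - c) 0)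
          + (∫ u in (L * π)..(2 * π - L * π), max (Real.cos u - c) 0)
          + (∫ u in (2 * π - L * π)..(2 * π), max (Real.cos u - c) 0) := by
      rw [intervalIntegral.integral_add_adjacent_intervals (hint' _ _) (hint' _ _),
        intervalIntegral.integral_add_adjacent_intervals (hint' _ _) (hint' _ _)]
    have hcosge : ∀ u ∈ Set.Icc (0:ℝ) (L * π), c ≤ Real.cos u := by
      intro u hu
      exact Real.cos_le_cos_of_nonneg_of_le_pi hu.1 hLπpi hu.2
    have hp1 : (∫ u in (0:ℝ)..(L * π), max (Real.cos u - c) 0)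
        = Real.sin (L * π) - c * (L * π) := by
      have e1 : Set.EqOn (fun u : ℝ => max (Real.cos u - c) 0) (fun u => Real.cos u - c)
          (Set.uIcc 0 (L * π)) := by
        intro u hu
        rw [Set.uIcc_of_le hLπ0.le] at hu
        exact max_eq_left (sub_nonneg.2 (hcosge u hu))
      rw [intervalIntegral.integral_congr e1,
        intervalIntegral.integral_sub (Real.continuous_cos.intervalIntegrable _ _)
          (intervalIntegrable_const)]
      simp [integral_cos, mul_comm]
    have hp2 : (∫ u in (L * π)..(2 * π - L * π), max (Real.cos u - c) 0) = 0 := by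
      have e2 : Set.EqOn (fun u : ℝ => max (Real.cos u - c) 0) (fun _ => (0:ℝ))
          (Set.uIcc (L * π) (2 * π - L * π)) := by
        intro u hu
        rw [Set.uIcc_of_le (by linarith)] at hu
        obtain ⟨hu1, hu2⟩ := hu
        have hle : Real.cos u ≤ c := by
          rcases le_or_gt u π with h | h
          · exact Real.cos_le_cos_of_nonneg_of_le_pi hLπ0.le h hu1
          · have : Real.cos u = Real.cos (2 * π - u) := (Real.cos_two_pi_sub u).symm
            rw [this]
            exact Real.cos_le_cos_of_nonneg_of_le_pi hLπ0.le (by linarith) (by linarith)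
        exact max_eq_right (sub_nonpos.2 hle)
      rw [intervalIntegral.integral_congr e2]
      simp
    have hp3 : (∫ u in (2 * π - L * π)..(2 * π), max (Real.cos u - c) 0)
        = Real.sin (L * π) - c * (L * π) := by
      have e3 : Set.EqOn (fun u : ℝ => max (Real.cos u - c) 0) (fun u => Real.cos u - c)
          (Set.uIcc (2 * π - L * π) (2 * π)) := by
        intro u hu
        rw [Set.uIcc_of_le (by linarith)] at hu
        obtain ⟨hu1, hu2⟩ := hu
        have hge : c ≤ Real.cos u := by
          have : Real.cos u = Real.cos (2 * π - u) := (Real.cos_two_pi_sub u).symm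
          rw [this]
          exact Real.cos_le_cos_of_nonneg_of_le_pi (by linarith) hLπpi (by linarith)
        exact max_eq_left (sub_nonneg.2 hge)
      rw [intervalIntegral.integral_congr e3,
        intervalIntegral.integral_sub (Real.continuous_cos.intervalIntegrable _ _)
          (intervalIntegrable_const)]
      rw [integral_cos, Real.sin_two_pi, Real.sin_two_pi_sub]
      simp
      ring
    rw [hsplit, hp1, hp2, hp3]
    rw [zsmul_eq_mul, smul_eq_mul]
    push_cast
    field_simp
    ring
  -- expand the LHS of hmono
  have hexp : ∫ x in Set.Ioo (0:ℝ) π, a x * (Real.cos (2 * j * x) - c)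
      = (∫ x in Set.Ioo (0:ℝ) π, a x * Real.cos (2 * j * x)) - c * (L * π) := by
    have hIac : IntegrableOn (fun x => a x * Real.cos (2 * j * x)) (Set.Ioo 0 π) := by
      refine bdd _ (ha.mul (Real.measurable_cos.comp (measurable_const.mul measurable_id))) 1 ?_
      intro x hx
      rw [abs_mul]
      calc |a x| * |Real.cos (2 * j * x)| ≤ 1 * 1 :=
          mul_le_mul (habs x hx) (Real.abs_cos_le_one _) (abs_nonneg _) zero_le_one
        _ = 1 := by ring
    have : ∀ x, a x * (Real.cos (2 * j * x) - c) = a x * Real.cos (2 * j * x) - c * a x := by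
      intro x; ring
    simp_rw [this]
    rw [integral_sub hIac (hIa.const_mul c), integral_const_mul, hint]
  have hkey : ∫ x in Set.Ioo (0:ℝ) π, a x * Real.cos (2 * j * x) ≤ Real.sin (L * π) := by
    rw [hexp] at hmono
    rw [hcalc] at hmono
    linarith
  -- final assembly
  have hsin2 : ∀ x, a x * Real.sin (j * x) ^ 2
      = a x * (1/2) - a x * Real.cos (2 * j * x) / 2 := by
    intro x
    rw [Real.sin_sq_eq_half_sub]
    ring_nf
  have hIac : IntegrableOn (fun x => a x * Real.cos (2 * j * x)) (Set.Ioo 0 π) := by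
    refine bdd _ (ha.mul (Real.measurable_cos.comp (measurable_const.mul measurable_id))) 1 ?_
    intro x hx
    rw [abs_mul]
    calc |a x| * |Real.cos (2 * j * x)| ≤ 1 * 1 :=
        mul_le_mul (habs x hx) (Real.abs_cos_le_one _) (abs_nonneg _) zero_le_one
      _ = 1 := by ring
  have hfinal : ∫ x in Set.Ioo (0:ℝ) π, a x * Real.sin (j * x) ^ 2
      = L * π / 2 - (∫ x in Set.Ioo (0:ℝ) π, a x * Real.cos (2 * j * x)) / 2 := by
    simp_rw [hsin2]
    rw [integral_sub (hIa.mul_const _) (hIac.div_const 2), integral_mul_const,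
      integral_div, hint]
    ring
  rw [hfinal]
  linarith
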